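/- (Expected per-iteration descent of Shotgun.) Fix x ≥ 0 at which F is differentiable, suppose F satisfies Assumption 2 with constant β > 0, and let ρ be the spectral radius of AᵀA. Perform one Shotgun iteration with P parallel updates at x, producing the random collective update Δx. Then E_{P_t}[ F(x + Δx) ] − F(x) ≤ −(Pβ/2) · (1 − (P−1)ρ/m) · E_j[ (δx_j)² ], where E_j is over a uniform index j ∈ {1,…,m} and δx_j = max{ −x_j , −(∇F(x))_j / β }. In particular, if P < m/ρ + 1 then Shotgun decreases the objective in expectation. -/

import Mathlib

open Matrix Finset

/-- `(∇F(x))_j`, the `j`-th coordinate of the gradient of `F` at `x`. -/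
noncomputable def grad {m : ℕ} (F : (Fin m → ℝ) → ℝ) (x : Fin m → ℝ) (j : Fin m) : ℝ :=
  fderiv ℝ F x (Pi.single j 1)

/-- Assumption 2 with constant `β > 0`: for every feasible `x` and `Δx`,
`F(x + Δx) ≤ F(x) + Δxᵀ ∇F(x) + (β/2) Δxᵀ AᵀA Δx`. -/
def Assumption2 {n m : ℕ} (A : Matrix (Fin n) (Fin m) ℝ) (β : ℝ)
    (F : (Fin m → ℝ) → ℝ) : Prop :=
  ∀ x Δx : Fin m → ℝ, 0 ≤ x → 0 ≤ x + Δx →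
    F (x + Δx) ≤ F x + (∑ j, Δx j * grad F x j) + β / 2 * (Δx ⬝ᵥ (Aᵀ * A).mulVec Δx)

/-- The spectral radius of a real square matrix: the supremum of the absolute values of its
eigenvalues. -/
noncomputable def specRad {ι : Type} [Fintype ι] [DecidableEq ι]
    (M : Matrix ι ι ℝ) : ℝ :=
  sSup {r : ℝ | ∃ μ : ℝ, Module.End.HasEigenvalue (Matrix.toLin' M) μ ∧ r = |μ|}

lemma sum_eval {ι : Type} [Fintype ι] [DecidableEq ι] {m : ℕ} (k : ι) (f : Fin m → ℝ) :
    ∑ σ : ι → Fin m, f (σ k) = (m : ℝ) ^ (Fintype.card ι - 1) * ∑ j, f j := by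
  rw [← Equiv.sum_comp (Equiv.funSplitAt k (Fin m)).symm (fun σ => f (σ k))]
  rw [Fintype.sum_prod_type]
  have hc : Fintype.card {j : ι // j ≠ k} = Fintype.card ι - 1 := by
    simp [Fintype.card_subtype_compl]
  simp only [Equiv.funSplitAt_symm_apply, dif_pos rfl, dite_true]
  rw [Finset.mul_sum]
  refine Finset.sum_congr rfl fun a _ => ?_
  rw [Finset.sum_const, nsmul_eq_mul]
  congr 1
  rw [Finset.card_univ, Fintype.card_fun, hc, Fintype.card_fin]
  push_cast
  ring
lemma sum_eval₂ {ι : Type} [Fintype ι] [DecidableEq ι] {m : ℕ} (k l : ι) (hkl : l ≠ k)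
    (g : Fin m → Fin m → ℝ) :
    ∑ σ : ι → Fin m, g (σ k) (σ l) =
      (m : ℝ) ^ (Fintype.card ι - 2) * ∑ i, ∑ j, g i j := by
  rw [← Equiv.sum_comp (Equiv.funSplitAt k (Fin m)).symm (fun σ => g (σ k) (σ l))]
  rw [Fintype.sum_prod_type]
  simp only [Equiv.funSplitAt_symm_apply, dif_pos rfl, dif_neg hkl]
  have hc : Fintype.card {j : ι // j ≠ k} = Fintype.card ι - 1 := by
    simp [Fintype.card_subtype_compl]
  have : ∀ a : Fin m, ∑ (gg : {j : ι // j ≠ k} → Fin m), g a (gg ⟨l, hkl⟩) =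
      (m : ℝ) ^ (Fintype.card ι - 2) * ∑ j, g a j := by
    intro a
    rw [sum_eval (⟨l, hkl⟩ : {j : ι // j ≠ k}) (fun b => g a b), hc, Nat.sub_sub]
  rw [Finset.mul_sum]
  exact Finset.sum_congr rfl fun a _ => this a
lemma eig_abs_le {m : ℕ} (M : Matrix (Fin m) (Fin m) ℝ) {μ : ℝ}
    (h : Module.End.HasEigenvalue (Matrix.toLin' M) μ) :
    |μ| ≤ ∑ i, ∑ j, |M i j| := by
  obtain ⟨v, hv⟩ := h.exists_hasEigenvector
  have heq : M *ᵥ v = μ • v := by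
    have := Module.End.mem_eigenspace_iff.1 hv.1
    simpa [Matrix.toLin'_apply] using this
  have hvne : ∃ j, v j ≠ 0 := by
    by_contra hc
    push_neg at hc
    exact hv.2 (funext hc)
  obtain ⟨j0, hj0⟩ := hvne
  have hne : (Finset.univ : Finset (Fin m)).Nonempty := ⟨j0, Finset.mem_univ _⟩
  obtain ⟨k, -, hk⟩ := Finset.exists_max_image Finset.univ (fun j => |v j|) hne
  have hkpos : 0 < |v k| := lt_of_lt_of_le (abs_pos.2 hj0) (hk j0 (Finset.mem_univ _))
  have h1 : μ * v k = ∑ i, M k i * v i := by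
    have h := congrFun heq k
    simp only [Matrix.mulVec, dotProduct, Pi.smul_apply, smul_eq_mul] at h
    rw [← h]
  have h2 : |μ| * |v k| ≤ (∑ i, ∑ j, |M i j|) * |v k| := by
    calc |μ| * |v k| = |μ * v k| := (abs_mul _ _).symm
      _ = |∑ i, M k i * v i| := by rw [h1]
      _ ≤ ∑ i, |M k i * v i| := Finset.abs_sum_le_sum_abs _ _
      _ ≤ ∑ i, |M k i| * |v k| := by
          refine Finset.sum_le_sum fun i _ => ?_
          rw [abs_mul]
          exact mul_le_mul_of_nonneg_left (hk i (Finset.mem_univ _)) (abs_nonneg _)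
      _ = (∑ i, |M k i|) * |v k| := by rw [Finset.sum_mul]
      _ ≤ (∑ i, ∑ j, |M i j|) * |v k| := by
          refine mul_le_mul_of_nonneg_right ?_ (le_of_lt hkpos)
          exact Finset.single_le_sum (f := fun i => ∑ j, |M i j|)
            (fun i _ => Finset.sum_nonneg fun j _ => abs_nonneg _) (Finset.mem_univ k)
  exact le_of_mul_le_mul_right h2 hkpos
lemma quad_le_specRad {m : ℕ} (hm : 0 < m) (M : Matrix (Fin m) (Fin m) ℝ)
    (hM : M.IsHermitian) (v : Fin m → ℝ) :
    v ⬝ᵥ M *ᵥ v ≤ specRad M * ∑ j, v j ^ 2 := by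
  by_cases hv : v = 0
  · simp [hv]
  haveI : Nonempty (Fin m) := ⟨⟨0, hm⟩⟩
  set E := EuclideanSpace ℝ (Fin m)
  haveI : Nontrivial E := by
    refine ⟨(WithLp.equiv 2 _).symm v, 0, ?_⟩
    intro h
    exact hv (congrArg (WithLp.equiv 2 _) h)
  set T : E →ₗ[ℝ] E := Matrix.toEuclideanLin M with hT
  have hTsym : T.IsSymmetric := Matrix.isHermitian_iff_isSymmetric.1 hM
  set μ : ℝ := ⨆ x : { x : E // x ≠ 0 }, RCLike.re (inner ℝ (T x) (x : E) : ℝ) / ‖(x : E)‖ ^ 2 with hμ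
  have heig : Module.End.HasEigenvalue T μ := hTsym.hasEigenvalue_iSup_of_finiteDimensional
  have heig' : Module.End.HasEigenvalue (Matrix.toLin' M) μ := by
    obtain ⟨w, hw⟩ := heig.exists_hasEigenvector
    have hweq : T w = μ • w := Module.End.mem_eigenspace_iff.1 hw.1
    refine Module.End.hasEigenvalue_of_hasEigenvector (x := WithLp.equiv 2 _ w)
      ⟨Module.End.mem_eigenspace_iff.2 ?_, fun h => hw.2 ((WithLp.equiv 2 _).injective h)⟩
    rw [Matrix.toLin'_apply]
    exact congrArg (WithLp.equiv 2 _) hweq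
  have hbdd : BddAbove {r : ℝ | ∃ μ' : ℝ, Module.End.HasEigenvalue (Matrix.toLin' M) μ' ∧ r = |μ'|} := by
    refine ⟨∑ i, ∑ j, |M i j|, ?_⟩
    rintro r ⟨μ', hμ', rfl⟩
    exact eig_abs_le M hμ'
  have hμρ : μ ≤ specRad M :=
    le_trans (le_abs_self μ) (le_csSup hbdd ⟨μ, heig', rfl⟩)
  set ve : E := (WithLp.equiv 2 _).symm v with hve
  have hvene : ve ≠ 0 := fun h => hv (congrArg (WithLp.equiv 2 _) h)
  set T' : E →L[ℝ] E := LinearMap.toContinuousLinearMap T with hT'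
  have hraybdd : BddAbove (Set.range fun x : { x : E // x ≠ 0 } =>
      RCLike.re (inner ℝ (T x) (x : E) : ℝ) / ‖(x : E)‖ ^ 2) := by
    refine ⟨‖T'‖, ?_⟩
    rintro r ⟨⟨y, hy⟩, rfl⟩
    have hy0 : (0:ℝ) < ‖y‖ := norm_pos_iff.2 hy
    have hy2 : (0:ℝ) < ‖y‖ ^ 2 := by positivity
    rw [div_le_iff₀ hy2]
    have h1 : (inner ℝ (T y) y : ℝ) ≤ ‖T y‖ * ‖y‖ := real_inner_le_norm _ _
    have h2 : ‖T y‖ ≤ ‖T'‖ * ‖y‖ := T'.le_opNorm y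
    calc RCLike.re (inner ℝ (T y) y : ℝ) = (inner ℝ (T y) y : ℝ) := rfl
      _ ≤ ‖T y‖ * ‖y‖ := h1
      _ ≤ ‖T'‖ * ‖y‖ * ‖y‖ := mul_le_mul_of_nonneg_right h2 (norm_nonneg _)
      _ = ‖T'‖ * ‖y‖ ^ 2 := by ring
  have hray : RCLike.re (inner ℝ (T ve) (ve : E) : ℝ) / ‖ve‖ ^ 2 ≤ μ :=
    le_ciSup hraybdd ⟨ve, hvene⟩
  have hnorm : ‖ve‖ ^ 2 = ∑ j, v j ^ 2 := by
    rw [← real_inner_self_eq_norm_sq]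
    rw [PiLp.inner_apply]
    refine Finset.sum_congr rfl fun j _ => ?_
    simp only [RCLike.inner_apply, starRingEnd_apply, star_trivial, sq]
    rfl
  have hinner : (inner ℝ (T ve) (ve : E) : ℝ) = v ⬝ᵥ M *ᵥ v := by
    rw [PiLp.inner_apply]
    rw [dotProduct_comm, dotProduct]
    refine Finset.sum_congr rfl fun j _ => ?_
    simp only [RCLike.inner_apply, starRingEnd_apply, star_trivial]
    rw [mul_comm]
    rfl
  have hve0 : (0:ℝ) < ‖ve‖ := norm_pos_iff.2 hvene
  have hpos : (0:ℝ) < ‖ve‖ ^ 2 := by positivity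
  have := (div_le_iff₀ hpos).1 hray
  calc v ⬝ᵥ M *ᵥ v = RCLike.re (inner ℝ (T ve) (ve : E) : ℝ) := by rw [← hinner]; rfl
    _ ≤ μ * ‖ve‖ ^ 2 := this
    _ ≤ specRad M * ‖ve‖ ^ 2 := mul_le_mul_of_nonneg_right hμρ (sq_nonneg _)
    _ = specRad M * ∑ j, v j ^ 2 := by rw [hnorm]
lemma sum_dotProduct' {ι κ : Type} [Fintype ι] [Fintype κ] (f : ι → κ → ℝ) (w : κ → ℝ) :
    (∑ k, f k) ⬝ᵥ w = ∑ k, f k ⬝ᵥ w := by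
  simp only [dotProduct, Finset.sum_apply, Finset.sum_mul]
  exact Finset.sum_comm
lemma dotProduct_sum' {ι κ : Type} [Fintype ι] [Fintype κ] (v : κ → ℝ) (f : ι → κ → ℝ) :
    v ⬝ᵥ (∑ k, f k) = ∑ k, v ⬝ᵥ f k := by
  simp only [dotProduct, Finset.sum_apply, Finset.mul_sum]
  exact Finset.sum_comm
lemma mulVec_sum' {ι κ κ' : Type} [Fintype ι] [Fintype κ] [Fintype κ']
    (M : Matrix κ' κ ℝ) (f : ι → κ → ℝ) :
    M *ᵥ (∑ k, f k) = ∑ k, M *ᵥ f k := by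
  ext i
  simp only [Matrix.mulVec, Finset.sum_apply]
  exact dotProduct_sum' _ _
lemma delta_grad_le {β xj g : ℝ} (hβ : 0 < β) (hxj : 0 ≤ xj) :
    max (-xj) (-g / β) * g ≤ -(β * (max (-xj) (-g / β)) ^ 2) := by
  rcases le_or_gt (-xj) (-g / β) with h | h
  · rw [max_eq_right h]
    have : -g / β * g = -(β * (-g / β) ^ 2) := by field_simp
    exact le_of_eq this
  · rw [max_eq_left h.le]
    have hg : β * xj < g := by
      rw [neg_div] at h
      have h1 : xj < g / β := by linarith
      have := (lt_div_iff₀ hβ).1 h1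
      linarith
    nlinarith [mul_le_mul_of_nonneg_left hg.le hxj]

/-- Expected per-iteration descent of Shotgun:
`E_{P_t}[F(x+Δx)] - F(x) ≤ -(Pβ/2)·(1 - (P-1)ρ/m)·E_j[(δx_j)²]`.
In particular, if `P < m/ρ + 1` then Shotgun decreases the objective in expectation. -/
theorem shotgun_expected_descent {n m P : ℕ} (hm : 0 < m)
    (A : Matrix (Fin n) (Fin m) ℝ) (hA : ∀ j : Fin m, ∑ i, (A i j) ^ 2 = 1)
    (β : ℝ) (hβ : 0 < β) (F : (Fin m → ℝ) → ℝ)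
    (hconv : ConvexOn ℝ {z : Fin m → ℝ | 0 ≤ z} F)
    (hF : Assumption2 A β F)
    (x : Fin m → ℝ) (hx : 0 ≤ x) (hdiff : DifferentiableAt ℝ F x)
    (ρ : ℝ) (hρ : ρ = specRad (Aᵀ * A))
    (δ : Fin m → ℝ) (hδ : ∀ j, δ j = max (-(x j)) (-(grad F x j) / β))
    (Δ : (Fin P → Fin m) → (Fin m → ℝ))
    (hΔ : ∀ σ : Fin P → Fin m, Δ σ = ∑ j : Fin P, Pi.single (σ j) (δ (σ j)))
    (hfeas : ∀ σ : Fin P → Fin m, 0 ≤ x + Δ σ) :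
    (1 / (m : ℝ) ^ P) * (∑ σ : Fin P → Fin m, F (x + Δ σ)) - F x ≤
      -((P : ℝ) * β / 2) * (1 - ((P : ℝ) - 1) * ρ / m) *
        ((1 / (m : ℝ)) * ∑ j, (δ j) ^ 2) ∧
    ((P : ℝ) < m / ρ + 1 →
      (1 / (m : ℝ) ^ P) * (∑ σ : Fin P → Fin m, F (x + Δ σ)) ≤ F x) := by
  have hm0 : ((m : ℝ)) ≠ 0 := Nat.cast_ne_zero.2 hm.ne'
  have hmp : (0:ℝ) < (m:ℝ) ^ P := by positivity
  set M : Matrix (Fin m) (Fin m) ℝ := Aᵀ * A with hMdef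
  set G : Fin m → ℝ := grad F x with hGdef
  set B : ℝ := ∑ j, (δ j) ^ 2 with hB
  set Aq : ℝ := ∑ j, δ j * G j with hAq
  set S : ℝ := δ ⬝ᵥ M *ᵥ δ with hS
  -- diagonal of M is 1
  have hMdiag : ∀ j, M j j = 1 := by
    intro j
    rw [hMdef, Matrix.mul_apply]
    simpa [Matrix.transpose_apply, sq] using hA j
  have hMherm : M.IsHermitian := by
    rw [Matrix.IsHermitian]
    ext i j
    simp [hMdef, Matrix.mul_apply, Matrix.conjTranspose_apply, Matrix.transpose_apply, mul_comm]
  -- spectral bound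
  have hSρ : S ≤ ρ * B := by
    rw [hρ, hS, hB]
    exact quad_le_specRad hm M hMherm δ
  -- gradient bound
  have hAqB : Aq ≤ -(β * B) := by
    rw [hAq, hB]
    rw [show -(β * ∑ j, (δ j)^2) = ∑ j, -(β * (δ j)^2) by rw [Finset.mul_sum, ← Finset.sum_neg_distrib]]
    refine Finset.sum_le_sum fun j _ => ?_
    rw [hδ j]
    exact delta_grad_le hβ (hx j)
  have hBpos : 0 ≤ B := Finset.sum_nonneg fun j _ => sq_nonneg _
  -- key pointwise bound
  have key : ∀ σ : Fin P → Fin m, F (x + Δ σ) ≤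
      F x + (∑ k : Fin P, δ (σ k) * G (σ k)) +
        β / 2 * (∑ k : Fin P, ∑ l : Fin P, δ (σ k) * (M (σ k) (σ l) * δ (σ l))) := by
    intro σ
    have h0 := hF x (Δ σ) hx (hfeas σ)
    have hlin : ∑ j, Δ σ j * grad F x j = ∑ k : Fin P, δ (σ k) * G (σ k) := by
      rw [hΔ σ]
      simp only [Finset.sum_apply, Finset.sum_mul]
      rw [Finset.sum_comm]
      refine Finset.sum_congr rfl fun k _ => ?_
      simp [Pi.single_apply, hGdef]
    have hquad : Δ σ ⬝ᵥ M *ᵥ Δ σ =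
        ∑ k : Fin P, ∑ l : Fin P, δ (σ k) * (M (σ k) (σ l) * δ (σ l)) := by
      rw [hΔ σ, mulVec_sum', sum_dotProduct']
      refine Finset.sum_congr rfl fun k _ => ?_
      rw [dotProduct_sum']
      refine Finset.sum_congr rfl fun l _ => ?_
      rw [Matrix.mulVec_single, single_dotProduct]
      rfl
    rw [hlin, hquad] at h0
    exact h0
  -- sum the key bound over σ
  have keysum : (∑ σ : Fin P → Fin m, F (x + Δ σ)) ≤
      (m:ℝ)^P * F x + (P:ℝ) * (m:ℝ)^(P-1) * Aq +
        β / 2 * ((P:ℝ) * (m:ℝ)^(P-1) * B +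
          (P:ℝ) * ((P-1 : ℕ):ℝ) * (m:ℝ)^(P-2) * S) := by
    have h1 := Finset.sum_le_sum (s := (Finset.univ : Finset (Fin P → Fin m))) (fun σ _ => key σ)
    refine le_trans h1 (le_of_eq ?_)
    rw [Finset.sum_add_distrib, Finset.sum_add_distrib]
    congr 1
    · congr 1
      · rw [Finset.sum_const, Finset.card_univ, Fintype.card_fun, Fintype.card_fin,
          Fintype.card_fin, nsmul_eq_mul]
        push_cast
        ring
      · rw [Finset.sum_comm]
        have : ∀ k : Fin P, (∑ σ : Fin P → Fin m, δ (σ k) * G (σ k)) =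
            (m:ℝ)^(P-1) * Aq := by
          intro k
          rw [sum_eval k (fun j => δ j * G j), Fintype.card_fin, hAq]
        rw [Finset.sum_congr rfl (fun k _ => this k), Finset.sum_const, Finset.card_univ,
          Fintype.card_fin, nsmul_eq_mul]
        ring
    · rw [← Finset.mul_sum]
      congr 1
      rw [Finset.sum_comm]
      have hterm : ∀ k : Fin P, (∑ σ : Fin P → Fin m, ∑ l : Fin P,
          δ (σ k) * (M (σ k) (σ l) * δ (σ l))) =
          (m:ℝ)^(P-1) * (∑ j, δ j * (M j j * δ j)) + ((P-1:ℕ):ℝ) * ((m:ℝ)^(P-2) * S) := by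
        intro k
        rw [Finset.sum_comm]
        rw [← Finset.add_sum_erase _ _ (Finset.mem_univ k)]
        congr 1
        · rw [sum_eval k (fun j => δ j * (M j j * δ j)), Fintype.card_fin]
        · have hl : ∀ l ∈ Finset.univ.erase k, (∑ σ : Fin P → Fin m,
              δ (σ k) * (M (σ k) (σ l) * δ (σ l))) = (m:ℝ)^(P-2) * S := by
            intro l hl
            have hlk : l ≠ k := Finset.ne_of_mem_erase hl
            rw [sum_eval₂ k l hlk (fun i j => δ i * (M i j * δ j)), Fintype.card_fin]
            congr 1
            rw [hS]
            simp only [dotProduct, Matrix.mulVec, Finset.mul_sum]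
            try exact Finset.sum_congr rfl fun i _ => Finset.sum_congr rfl fun j _ => by ring
          rw [Finset.sum_congr rfl hl, Finset.sum_const, Finset.card_erase_of_mem (Finset.mem_univ k),
            Finset.card_univ, Fintype.card_fin, nsmul_eq_mul]
      have hD : (∑ j, δ j * (M j j * δ j)) = B := by
        rw [hB]
        refine Finset.sum_congr rfl fun j _ => ?_
        rw [hMdiag j]
        ring
      rw [Finset.sum_congr rfl (fun k _ => hterm k), Finset.sum_add_distrib, hD]
      rw [Finset.sum_const, Finset.sum_const, Finset.card_univ, Fintype.card_fin,
        nsmul_eq_mul, nsmul_eq_mul]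
      ring
  have part1 : (1 / (m : ℝ) ^ P) * (∑ σ : Fin P → Fin m, F (x + Δ σ)) - F x ≤
      -((P : ℝ) * β / 2) * (1 - ((P : ℝ) - 1) * ρ / m) * ((1 / (m : ℝ)) * B) := by
    rw [sub_le_iff_le_add, one_div, inv_mul_le_iff₀ hmp]
    calc (∑ σ : Fin P → Fin m, F (x + Δ σ)) ≤
        (m:ℝ)^P * F x + (P:ℝ) * (m:ℝ)^(P-1) * Aq +
          β / 2 * ((P:ℝ) * (m:ℝ)^(P-1) * B +
            (P:ℝ) * ((P-1 : ℕ):ℝ) * (m:ℝ)^(P-2) * S) := keysum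
      _ ≤ (m:ℝ)^P * F x + (P:ℝ) * (m:ℝ)^(P-1) * (-(β * B)) +
          β / 2 * ((P:ℝ) * (m:ℝ)^(P-1) * B +
            (P:ℝ) * ((P-1 : ℕ):ℝ) * (m:ℝ)^(P-2) * (ρ * B)) := by gcongr
      _ = (m:ℝ)^P * (-((P : ℝ) * β / 2) * (1 - ((P : ℝ) - 1) * ρ / m) *
            ((1 / (m : ℝ)) * B) + F x) := by
          rcases Nat.eq_zero_or_pos P with hP0 | hP1
          · subst hP0
            norm_num
          · have hc : ((P-1:ℕ):ℝ) = (P:ℝ) - 1 := by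
              rw [Nat.cast_sub hP1]
              norm_num
            have e1 : (m:ℝ)^P = (m:ℝ) * (m:ℝ)^(P-1) := by
              rw [← pow_succ']
              congr 1
              omega
            rcases eq_or_lt_of_le (Nat.succ_le_of_lt hP1) with hP1' | hP2
            · have hP1'' : P = 1 := hP1'.symm
              subst hP1''
              norm_num
              field_simp
              ring
            · have e2 : (m:ℝ)^(P-1) = (m:ℝ) * (m:ℝ)^(P-2) := by
                rw [← pow_succ']
                congr 1
                omega
              rw [hc, e1, e2]
              field_simp
              ring
  refine ⟨part1, fun hPm => ?_⟩
  have hR : -((P : ℝ) * β / 2) * (1 - ((P : ℝ) - 1) * ρ / m) * ((1 / (m : ℝ)) * B) ≤ 0 := by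
    rcases Nat.eq_zero_or_pos P with hP0 | hP1
    · subst hP0
      norm_num
    · have hP1R : (1:ℝ) ≤ (P:ℝ) := by exact_mod_cast hP1
      have hmR : (0:ℝ) < (m:ℝ) := by exact_mod_cast hm
      have hfac : 0 ≤ 1 - ((P:ℝ) - 1) * ρ / m := by
        rcases le_or_gt ρ 0 with hρ0 | hρ0
        · have h1 : ((P:ℝ) - 1) * ρ ≤ 0 := mul_nonpos_of_nonneg_of_nonpos (by linarith) hρ0
          have h2 : ((P:ℝ) - 1) * ρ / m ≤ 0 := div_nonpos_of_nonpos_of_nonneg h1 hmR.le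
          linarith
        · have h2 : (P:ℝ) - 1 < m / ρ := by linarith
          have h3 : ((P:ℝ) - 1) * ρ < m := by
            calc ((P:ℝ) - 1) * ρ < (m / ρ) * ρ := mul_lt_mul_of_pos_right h2 hρ0
              _ = m := by field_simp
          have h4 : ((P:ℝ) - 1) * ρ / m < 1 := (div_lt_one hmR).2 h3
          linarith
      have ha : (0:ℝ) ≤ (P:ℝ) * β / 2 := by positivity
      have hc : (0:ℝ) ≤ (1 / (m:ℝ)) * B := by positivity
      nlinarith [mul_nonneg (mul_nonneg ha hfac) hc]
  linarith [part1]
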